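/- arXiv:1208.3629 — 3 statements merged into one kernel-verified Lean document; each statement's English description precedes it below -/
import Mathlib

section
/- Let G be a finite simple graph with n vertices, m edges, and maximum degree at most Δ, where Δ ≥ 1. Then (m/(2Δ − 1))·log 2 ≤ log Z(G,1) ≤ m·log 2 ≤ (nΔ/2)·log 2, where Z(G,1) is the total number of matchings of G (including the empty matching). -/
open scoped Classical

noncomputable section

/-- `M` is a matching of `G`: a set of edges of `G`, no two of which share an endpoint. -/
def IsMatchingF {V : Type*} (G : SimpleGraph V) (M : Finset (Sym2 V)) : Prop :=
  (∀ e ∈ M, e ∈ G.edgeSet) ∧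
  ∀ e ∈ M, ∀ f ∈ M, e ≠ f → ∀ v : V, v ∈ e → v ∉ f

/-- The monomer-dimer partition function `Z(G,λ) = Σ_{M matching of G} λ^{|M|}`. -/
def Zmd {V : Type*} [Fintype V] (G : SimpleGraph V) (lam : ℝ) : ℝ :=
  ∑ M : Finset (Sym2 V), if IsMatchingF G M then lam ^ M.card else 0

lemma Zmd_one_eq {V : Type*} [Fintype V] (G : SimpleGraph V) :
    Zmd G 1 = ((Finset.univ.filter (fun M => IsMatchingF G M)).card : ℝ) := by
  rw [Finset.card_filter]
  push_cast
  simp [Zmd]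

theorem stmt9 {V : Type*} [Fintype V] (G : SimpleGraph V) (Δ : ℕ) (hΔ : 1 ≤ Δ)
    (hdeg : ∀ v : V, G.degree v ≤ Δ) :
    ((G.edgeFinset.card : ℝ) / (2 * Δ - 1)) * Real.log 2 ≤ Real.log (Zmd G 1) ∧
    Real.log (Zmd G 1) ≤ (G.edgeFinset.card : ℝ) * Real.log 2 ∧
    (G.edgeFinset.card : ℝ) * Real.log 2 ≤ ((Fintype.card V : ℝ) * Δ / 2) * Real.log 2 := by
  classical
  set s : Finset (Finset (Sym2 V)) := Finset.univ.filter (fun M => IsMatchingF G M) with hs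
  have hempty : (∅ : Finset (Sym2 V)) ∈ s := by
    exact Finset.mem_filter.mpr ⟨Finset.mem_univ _, by simp [IsMatchingF]⟩
  -- maximum matching
  obtain ⟨M, hMs, hmax⟩ := Finset.exists_max_image s Finset.card ⟨∅, hempty⟩
  have hM : IsMatchingF G M := by simpa [hs] using hMs
  -- every edge meets M
  have hcover : ∀ e ∈ G.edgeFinset, ∃ f ∈ M, ∃ v : V, v ∈ e ∧ v ∈ f := by
    intro e he
    by_contra hcon
    push_neg at hcon
    have hdisj : ∀ f ∈ M, ∀ v : V, v ∈ e → v ∉ f := by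
      intro f hf v hv hvf
      exact (hcon f hf v) hv hvf
    have heM : e ∉ M := by
      intro heM
      induction e using Sym2.ind with
      | _ a b => exact hdisj _ heM a (by simp) (by simp)
    have hins : IsMatchingF G (insert e M) := by
      constructor
      · intro f hf
        rcases Finset.mem_insert.mp hf with rfl | hf
        · exact SimpleGraph.mem_edgeFinset.mp he
        · exact hM.1 f hf
      · intro e1 h1 e2 h2 hne v hv1
        rcases Finset.mem_insert.mp h1 with h1 | h1
        · rcases Finset.mem_insert.mp h2 with h2 | h2
          · exact absurd (h1.trans h2.symm) hne
          · exact hdisj e2 h2 v (h1 ▸ hv1)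
        · rcases Finset.mem_insert.mp h2 with h2 | h2
          · intro hv2; exact hdisj e1 h1 v (h2 ▸ hv2) hv1
          · exact hM.2 e1 h1 e2 h2 hne v hv1
    have : (insert e M).card ≤ M.card := by
      apply hmax
      simp [hs, hins]
    rw [Finset.card_insert_of_notMem heM] at this
    omega
  -- m ≤ (2Δ-1) |M|
  have hcount : G.edgeFinset.card ≤ M.card * (2 * Δ - 1) := by
    have hsub : G.edgeFinset ⊆ M.biUnion
        (fun f => G.edgeFinset.filter (fun e => ∃ v : V, v ∈ e ∧ v ∈ f)) := by
      intro e he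
      obtain ⟨f, hf, v, hv⟩ := hcover e he
      exact Finset.mem_biUnion.mpr ⟨f, hf, Finset.mem_filter.mpr ⟨he, v, hv⟩⟩
    calc G.edgeFinset.card
        ≤ (M.biUnion (fun f => G.edgeFinset.filter (fun e => ∃ v : V, v ∈ e ∧ v ∈ f))).card :=
          Finset.card_le_card hsub
      _ ≤ ∑ f ∈ M, (G.edgeFinset.filter (fun e => ∃ v : V, v ∈ e ∧ v ∈ f)).card :=
          Finset.card_biUnion_le
      _ ≤ M.card * (2 * Δ - 1) := by
          rw [← smul_eq_mul]
          apply Finset.sum_le_card_nsmul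
          intro f hf
          have hfe : f ∈ G.edgeSet := hM.1 f hf
          induction f using Sym2.ind with
          | _ a b =>
            have hadj : G.Adj a b := hfe
            have hsub2 : G.edgeFinset.filter (fun e => ∃ v : V, v ∈ e ∧ v ∈ s(a, b))
                ⊆ G.incidenceFinset a ∪ G.incidenceFinset b := by
              intro e he'
              obtain ⟨he, v, hve, hvf⟩ := Finset.mem_filter.mp he'
              rcases Sym2.mem_iff.mp hvf with rfl | rfl
              · exact Finset.mem_union_left _
                  (by rw [SimpleGraph.mem_incidenceFinset]
                      exact ⟨SimpleGraph.mem_edgeFinset.mp he, hve⟩)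
              · exact Finset.mem_union_right _
                  (by rw [SimpleGraph.mem_incidenceFinset]
                      exact ⟨SimpleGraph.mem_edgeFinset.mp he, hve⟩)
            have hmem : s(a, b) ∈ G.incidenceFinset a ∩ G.incidenceFinset b := by
              rw [Finset.mem_inter, SimpleGraph.mem_incidenceFinset,
                SimpleGraph.mem_incidenceFinset]
              exact ⟨⟨hadj, by simp⟩, ⟨hadj, by simp⟩⟩
            have hinter : 1 ≤ (G.incidenceFinset a ∩ G.incidenceFinset b).card :=
              Finset.card_pos.mpr ⟨_, hmem⟩
            have hkey := Finset.card_union_add_card_inter (G.incidenceFinset a)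
              (G.incidenceFinset b)
            have hda : (G.incidenceFinset a).card = G.degree a :=
              G.card_incidenceFinset_eq_degree a
            have hdb : (G.incidenceFinset b).card = G.degree b :=
              G.card_incidenceFinset_eq_degree b
            have h1 := Finset.card_le_card hsub2
            have h2 := hdeg a
            have h3 := hdeg b
            omega
  -- matchings counting bounds
  have hpow_lower : 2 ^ M.card ≤ s.card := by
    have : M.powerset ⊆ s := by
      intro N hN
      have hNM : N ⊆ M := Finset.mem_powerset.mp hN
      have : IsMatchingF G N :=
        ⟨fun e he => hM.1 e (hNM he),
         fun e he f hf hne v hv => hM.2 e (hNM he) f (hNM hf) hne v hv⟩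
      simp [hs, this]
    calc 2 ^ M.card = M.powerset.card := (Finset.card_powerset M).symm
      _ ≤ s.card := Finset.card_le_card this
  have hpow_upper : s.card ≤ 2 ^ G.edgeFinset.card := by
    have : s ⊆ G.edgeFinset.powerset := by
      intro N hN
      have hN' : IsMatchingF G N := by simpa [hs] using hN
      exact Finset.mem_powerset.mpr fun e he => SimpleGraph.mem_edgeFinset.mpr (hN'.1 e he)
    calc s.card ≤ G.edgeFinset.powerset.card := Finset.card_le_card this
      _ = 2 ^ G.edgeFinset.card := Finset.card_powerset _
  have hspos : 0 < s.card := Finset.card_pos.mpr ⟨∅, hempty⟩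
  have hZ : Zmd G 1 = (s.card : ℝ) := Zmd_one_eq G
  have hΔR : (1 : ℝ) ≤ 2 * (Δ : ℝ) - 1 := by
    have : (1 : ℝ) ≤ (Δ : ℝ) := by exact_mod_cast hΔ
    linarith
  have hlog2 : (0 : ℝ) ≤ Real.log 2 := Real.log_nonneg (by norm_num)
  refine ⟨?_, ?_, ?_⟩
  · -- lower bound
    have h1 : ((G.edgeFinset.card : ℝ) / (2 * Δ - 1)) ≤ (M.card : ℝ) := by
      rw [div_le_iff₀ (by linarith)]
      have : (G.edgeFinset.card : ℝ) ≤ (M.card : ℝ) * ((2 * Δ : ℝ) - 1) := by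
        have h2 : (G.edgeFinset.card : ℝ) ≤ ((M.card * (2 * Δ - 1) : ℕ) : ℝ) := by
          exact_mod_cast hcount
        have h3 : ((M.card * (2 * Δ - 1) : ℕ) : ℝ) = (M.card : ℝ) * ((2 * Δ : ℝ) - 1) := by
          push_cast [Nat.cast_sub (by omega : 1 ≤ 2 * Δ)]
          ring
        linarith
      linarith
    have h2 : (M.card : ℝ) * Real.log 2 ≤ Real.log (s.card : ℝ) := by
      rw [← Real.log_pow]
      apply Real.log_le_log (by positivity)
      exact_mod_cast hpow_lower
    rw [hZ]
    calc ((G.edgeFinset.card : ℝ) / (2 * Δ - 1)) * Real.log 2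
        ≤ (M.card : ℝ) * Real.log 2 := by
          apply mul_le_mul_of_nonneg_right h1 hlog2
      _ ≤ Real.log (s.card : ℝ) := h2
  · rw [hZ, ← Real.log_pow]
    apply Real.log_le_log (by exact_mod_cast hspos)
    exact_mod_cast hpow_upper
  · apply mul_le_mul_of_nonneg_right _ hlog2
    have hhand := G.sum_degrees_eq_twice_card_edges
    have hsum : ∑ v : V, G.degree v ≤ Fintype.card V * Δ := by
      calc ∑ v : V, G.degree v ≤ ∑ _v : V, Δ := Finset.sum_le_sum (fun v _ => hdeg v)
        _ = Fintype.card V * Δ := by simp [Finset.sum_const, Finset.card_univ, mul_comm]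
    have : 2 * G.edgeFinset.card ≤ Fintype.card V * Δ := by omega
    have hR : (2 : ℝ) * G.edgeFinset.card ≤ (Fintype.card V : ℝ) * Δ := by exact_mod_cast this
    linarith
end
end

section
/- Fix λ > 0 and an integer Δ ≥ 1, let (y_k)_{k≥1} be given by y_1 = 1 and y_{k+1} = 1/(1 + λΔ·y_k), and let α = (1 + √(1 + 4λΔ))/2 and β = (1 − √(1 + 4λΔ))/2. Set C_Δ = (α² + β² − 2αβ)/α³ and D_Δ = |β|/α. Then |y_k − y_{k−1}| is asymptotically equivalent to C_Δ·(D_Δ)^{k−1} as k → ∞, i.e., lim_{k→∞} |y_k − y_{k−1}| / (D_Δ)^{k−1} = C_Δ. -/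
theorem stmt13 (lam : ℝ) (hlam : 0 < lam) (Δ : ℕ) (hΔ : 1 ≤ Δ)
    (y : ℕ → ℝ) (hy1 : y 1 = 1)
    (hrec : ∀ k : ℕ, 1 ≤ k → y (k + 1) = 1 / (1 + lam * Δ * y k))
    (α β C D : ℝ) (hα : α = (1 + Real.sqrt (1 + 4 * lam * Δ)) / 2)
    (hβ : β = (1 - Real.sqrt (1 + 4 * lam * Δ)) / 2)
    (hC : C = (α ^ 2 + β ^ 2 - 2 * α * β) / α ^ 3)
    (hD : D = |β| / α) :
    Filter.Tendsto (fun k : ℕ => |y k - y (k - 1)| / D ^ (k - 1))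
      Filter.atTop (nhds C) := by
  set μ : ℝ := lam * Δ with hμdef
  have hΔ1 : (1:ℝ) ≤ Δ := by exact_mod_cast hΔ
  have hμ : 0 < μ := by
    have : (0:ℝ) < Δ := lt_of_lt_of_le one_pos hΔ1
    exact mul_pos hlam this
  set s : ℝ := Real.sqrt (1 + 4 * lam * Δ) with hsdef
  have hsq : s ^ 2 = 1 + 4 * μ := by
    rw [hsdef, Real.sq_sqrt (by nlinarith)]
    ring
  have hsnn : 0 ≤ s := Real.sqrt_nonneg _
  have hs : 1 < s := by nlinarith
  have hα1 : 1 < α := by rw [hα]; linarith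
  have hαpos : 0 < α := lt_trans one_pos hα1
  have hβneg : β < 0 := by rw [hβ]; linarith
  have hβα : -β < α := by rw [hα, hβ]; linarith
  have hαβ : α * β = -μ := by
    rw [hα, hβ]; linear_combination (-1/4) * hsq
  have hαsq : α ^ 2 = α + μ := by
    rw [hα]; linear_combination hsq / 4
  have hβsq : β ^ 2 = β + μ := by
    rw [hβ]; linear_combination hsq / 4
  have hsum : α + β = 1 := by rw [hα, hβ]; ring
  -- positivity of A n = α^n - β^n for n ≥ 1
  have hApos : ∀ n : ℕ, 1 ≤ n → 0 < α ^ n - β ^ n := by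
    intro n hn
    have h1 : β ^ n ≤ |β| ^ n := by
      rw [← abs_pow]; exact le_abs_self _
    have h2 : |β| ^ n < α ^ n := by
      apply pow_lt_pow_left₀ _ (abs_nonneg _) (by omega)
      rw [abs_of_neg hβneg]; exact hβα
    linarith
  -- closed form
  have hyA : ∀ n : ℕ, 1 ≤ n → y n = (α ^ n - β ^ n) / (α ^ (n + 1) - β ^ (n + 1)) := by
    intro n hn
    induction n, hn using Nat.le_induction with
    | base =>
      have h2 : α ^ 2 - β ^ 2 ≠ 0 := ne_of_gt (hApos 2 (by norm_num))
      rw [hy1]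
      field_simp
      linear_combination (α - β) * hsum
    | succ n hn IH =>
      have h1 : α ^ (n + 1) - β ^ (n + 1) ≠ 0 := ne_of_gt (hApos (n + 1) (by omega))
      have hA : α ^ (n + 2) - β ^ (n + 2) = (α ^ (n + 1) - β ^ (n + 1)) + μ * (α ^ n - β ^ n) := by
        linear_combination α ^ n * hαsq - β ^ n * hβsq
      have key : 1 + μ * ((α ^ n - β ^ n) / (α ^ (n + 1) - β ^ (n + 1)))
          = (α ^ (n + 2) - β ^ (n + 2)) / (α ^ (n + 1) - β ^ (n + 1)) := by
        field_simp
        linear_combination -(α ^ n) * hαsq + β ^ n * hβsq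
      rw [hrec n hn, IH, key, one_div_div]
  -- pointwise identity
  have hC' : C = (α - β) ^ 2 / α ^ 3 := by rw [hC]; ring_nf
  have hD' : D = -β / α := by rw [hD, abs_of_neg hβneg]
  have hpt : ∀ m : ℕ, |y (m + 2) - y (m + 1)| / D ^ (m + 1)
      = C * ((α ^ (m + 2) / (α ^ (m + 2) - β ^ (m + 2))) *
             (α ^ (m + 3) / (α ^ (m + 3) - β ^ (m + 3)))) := by
    intro m
    have h2 : 0 < α ^ (m + 2) - β ^ (m + 2) := hApos _ (by omega)
    have h3 : 0 < α ^ (m + 3) - β ^ (m + 3) := hApos _ (by omega)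
    have hdiff : y (m + 2) - y (m + 1)
        = (-μ) ^ (m + 1) * (α - β) ^ 2 / ((α ^ (m + 2) - β ^ (m + 2)) * (α ^ (m + 3) - β ^ (m + 3))) := by
      rw [hyA (m + 2) (by omega), hyA (m + 1) (by omega)]
      have e2 : m + 1 + 1 = m + 2 := by ring
      have e3 : m + 2 + 1 = m + 3 := by ring
      rw [e2, e3]
      rw [div_sub_div _ _ (ne_of_gt h3) (ne_of_gt h2),
        mul_comm (α ^ (m + 3) - β ^ (m + 3)) (α ^ (m + 2) - β ^ (m + 2))]
      congr 1
      have hab : (-μ) ^ (m + 1) = (α * β) ^ (m + 1) := by rw [hαβ]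
      rw [hab]
      ring
    have habs : |y (m + 2) - y (m + 1)|
        = μ ^ (m + 1) * (α - β) ^ 2 / ((α ^ (m + 2) - β ^ (m + 2)) * (α ^ (m + 3) - β ^ (m + 3))) := by
      rw [hdiff, abs_div, abs_mul, abs_pow, abs_neg, abs_of_pos hμ,
        abs_of_pos (mul_pos h2 h3), abs_of_nonneg (sq_nonneg _)]
    rw [habs, hD', hC']
    have hμab : μ = α * (-β) := by linear_combination hαβ
    have hβ0 : -β ≠ 0 := by linarith
    rw [hμab]
    rw [mul_pow, div_pow]
    field_simp
    ring
  -- limit of α^n / (α^n - β^n)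
  have hr : |β / α| < 1 := by
    rw [abs_div, abs_of_pos hαpos, div_lt_one hαpos, abs_of_neg hβneg]
    exact hβα
  have h0 : Filter.Tendsto (fun n : ℕ => (β / α) ^ n) Filter.atTop (nhds 0) :=
    tendsto_pow_atTop_nhds_zero_of_abs_lt_one hr
  have hG : Filter.Tendsto (fun n : ℕ => α ^ n / (α ^ n - β ^ n)) Filter.atTop (nhds 1) := by
    have h1 : Filter.Tendsto (fun n : ℕ => 1 / (1 - (β / α) ^ n)) Filter.atTop (nhds (1 / (1 - 0))) :=
      Filter.Tendsto.div tendsto_const_nhds (tendsto_const_nhds.sub h0) (by norm_num)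
    simp only [sub_zero, div_one] at h1
    apply h1.congr
    intro n
    have hαn : (α : ℝ) ^ n ≠ 0 := pow_ne_zero _ (ne_of_gt hαpos)
    rw [div_pow, one_sub_div hαn, one_div_div]
  have hT : Filter.Tendsto (fun m : ℕ => C * ((α ^ (m + 2) / (α ^ (m + 2) - β ^ (m + 2))) *
      (α ^ (m + 3) / (α ^ (m + 3) - β ^ (m + 3))))) Filter.atTop (nhds C) := by
    have := tendsto_const_nhds (x := C) (f := Filter.atTop (α := ℕ)) |>.mul
      ((hG.comp (Filter.tendsto_add_atTop_nat 2)).mul (hG.comp (Filter.tendsto_add_atTop_nat 3)))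
    simpa using this
  have hT2 := hT.comp (Filter.tendsto_sub_atTop_nat 2)
  apply hT2.congr'
  filter_upwards [Filter.eventually_ge_atTop 2] with k hk
  obtain ⟨m, rfl⟩ : ∃ m, k = m + 2 := ⟨k - 2, by omega⟩
  have e1 : m + 2 - 2 = m := by omega
  have e2 : m + 2 - 1 = m + 1 := by omega
  simp only [Function.comp, e1, e2]
  exact (hpt m).symm
end

section
/- Fix λ > 0. For an integer Δ ≥ 1 let (y_k)_{k≥1} be given by y_1 = 1 and y_{k+1} = 1/(1 + λΔ·y_k), and for ε > 0 define h̲(ε,Δ) = sup{ h ≥ 2 : |y_h − y_{h−1}| ≥ ε } (which is finite for all sufficiently small ε > 0). Then for each Δ the limit lim_{ε→0⁺} h̲(ε,Δ)/log(1/ε) exists and equals −1/log(|β|/α), where α = (1 + √(1 + 4λΔ))/2 and β = (1 − √(1 + 4λΔ))/2, and moreover lim_{Δ→∞} (1/√Δ)·lim_{ε→0⁺} h̲(ε,Δ)/log(1/ε) = √λ. -/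
noncomputable section

/-- The sequence `y_1 = 1`, `y_{k+1} = 1/(1 + λΔ·y_k)` (with junk value `y_0 = 1`). -/
def yseq (lam : ℝ) (Δ : ℕ) : ℕ → ℝ
  | 0 => 1
  | 1 => 1
  | (k + 2) => 1 / (1 + lam * Δ * yseq lam Δ (k + 1))

/-- `h̲(ε,Δ) = sup { h ≥ 2 : |y_h − y_{h−1}| ≥ ε }`. -/
def hlow (lam : ℝ) (Δ : ℕ) (ε : ℝ) : ℕ :=
  sSup {h : ℕ | 2 ≤ h ∧ ε ≤ |yseq lam Δ h - yseq lam Δ (h - 1)|}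

/-- `α = (1 + √(1 + 4λΔ))/2`. -/
def alphaMD (lam : ℝ) (Δ : ℕ) : ℝ := (1 + Real.sqrt (1 + 4 * lam * Δ)) / 2

/-- `β = (1 − √(1 + 4λΔ))/2`. -/
def betaMD (lam : ℝ) (Δ : ℕ) : ℝ := (1 - Real.sqrt (1 + 4 * lam * Δ)) / 2

open Filter Real

/-! ### Auxiliary sequence `qseq` (continued-fraction denominators) -/

def qseq (c : ℝ) : ℕ → ℝ
  | 0 => 1
  | 1 => 1
  | (k + 2) => qseq c (k + 1) + c * qseq c k

lemma qseq_pos (c : ℝ) (hc : 0 < c) : ∀ k, 0 < qseq c k := by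
  intro k
  induction k using Nat.twoStepInduction with
  | zero => norm_num [qseq]
  | one => norm_num [qseq]
  | more n ih1 ih2 => simp only [qseq]; positivity

lemma qseq_det (c : ℝ) : ∀ k, qseq c (k+1)^2 - qseq c (k+2) * qseq c k = (-c)^(k+1) := by
  intro k
  induction k with
  | zero => simp [qseq]
  | succ n ih =>
    have hrec : qseq c (n+3) = qseq c (n+2) + c * qseq c (n+1) := rfl
    have hrec2 : qseq c (n+2) = qseq c (n+1) + c * qseq c n := rfl
    show qseq c (n+2)^2 - qseq c (n+3) * qseq c (n+1) = (-c)^(n+2)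
    have : qseq c (n+2)^2 - qseq c (n+3) * qseq c (n+1)
        = -c * (qseq c (n+1)^2 - qseq c (n+2) * qseq c n) := by
      rw [hrec, hrec2]; ring
    rw [this, ih]; ring

lemma yseq_eq (lam : ℝ) (Δ : ℕ) (hc : 0 < lam * Δ) :
    ∀ k, yseq lam Δ (k + 1) = qseq (lam * Δ) k / qseq (lam * Δ) (k + 1) := by
  intro k
  induction k with
  | zero => norm_num [yseq, qseq]
  | succ n ih =>
    have h1 := qseq_pos _ hc (n + 1)
    have h2 := qseq_pos _ hc n
    rw [show yseq lam Δ (n + 1 + 1) = 1 / (1 + lam * Δ * yseq lam Δ (n + 1)) from rfl, ih,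
      show qseq (lam * Δ) (n + 1 + 1) = qseq (lam*Δ) (n+1) + (lam*Δ) * qseq (lam*Δ) n from rfl]
    have hd : qseq (lam*Δ) (n+1) + (lam*Δ) * qseq (lam*Δ) n > 0 := by positivity
    field_simp

lemma alpha_sq (c : ℝ) (hc : 0 ≤ c) :
    ((1 + Real.sqrt (1 + 4*c))/2)^2 = (1 + Real.sqrt (1 + 4*c))/2 + c := by
  have h : Real.sqrt (1+4*c) ^ 2 = 1 + 4*c := Real.sq_sqrt (by linarith)
  nlinarith [h]

lemma s_ge_one (c : ℝ) (hc : 0 ≤ c) : 1 ≤ Real.sqrt (1 + 4*c) := by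
  have := Real.sqrt_le_sqrt (show (1:ℝ) ≤ 1+4*c by linarith)
  simpa using this

lemma qseq_le_alpha (c : ℝ) (hc : 0 < c) :
    ∀ k, qseq c k ≤ ((1 + Real.sqrt (1 + 4*c))/2)^k := by
  set α := (1 + Real.sqrt (1 + 4*c))/2 with hα
  have hs := s_ge_one c hc.le
  have hα1 : 1 ≤ α := by rw [hα]; linarith
  have hsq := alpha_sq c hc.le
  intro k
  induction k using Nat.twoStepInduction with
  | zero => simp [qseq]
  | one => simpa [qseq] using hα1
  | more n ih1 ih2 =>
    have hq : qseq c (n+2) = qseq c (n+1) + c * qseq c n := rfl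
    have hpow : α^(n+2) = α^n * (α + c) := by rw [← hsq]; ring
    rw [hq, hpow]
    have hqn := qseq_pos c hc n
    have h1 : α^(n+1) = α^n * α := by ring
    nlinarith [pow_pos (by linarith : (0:ℝ) < α) n]

lemma alpha_le_qseq (c : ℝ) (hc : 0 < c) :
    ∀ k, ((1 + Real.sqrt (1 + 4*c))/2)^k / Real.sqrt (1 + 4*c) ≤ qseq c k := by
  set s := Real.sqrt (1 + 4*c) with hsdef
  set α := (1 + s)/2 with hα
  have hs := s_ge_one c hc.le
  have hα1 : 1 ≤ α := by rw [hα]; linarith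
  have hsq := alpha_sq c hc.le
  intro k
  induction k using Nat.twoStepInduction with
  | zero =>
    simp only [pow_zero, qseq]
    rw [div_le_one (by linarith)]; exact hs
  | one =>
    simp only [pow_one, qseq]
    rw [div_le_one (by linarith), hα]; linarith
  | more n ih1 ih2 =>
    have hq : qseq c (n+2) = qseq c (n+1) + c * qseq c n := rfl
    have hpow : α^(n+2) = α^(n+1) + c * α^n := by
      have : α^(n+2) = α^n * α^2 := by ring
      rw [this, hsq]; ring
    rw [hq, hpow, add_div]
    have : c * α ^ n / s = c * (α^n / s) := by ring
    rw [this]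
    have h2 : c * (α^n/s) ≤ c * qseq c n := by
      apply mul_le_mul_of_nonneg_left ih1 hc.le
    linarith

lemma yseq_diff (lam : ℝ) (Δ : ℕ) (hc : 0 < lam * Δ) (k : ℕ) :
    |yseq lam Δ (k+2) - yseq lam Δ (k+1)|
      = (lam*Δ)^(k+1) / (qseq (lam*Δ) (k+1) * qseq (lam*Δ) (k+2)) := by
  have h1 := qseq_pos _ hc (k+1)
  have h2 := qseq_pos _ hc (k+2)
  have h0 := qseq_pos _ hc k
  rw [show k+2 = (k+1)+1 from rfl, yseq_eq _ _ hc (k+1), yseq_eq _ _ hc k]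
  have hdet := qseq_det (lam*Δ) k
  have key : qseq (lam*Δ) (k+1) / qseq (lam*Δ) (k+1+1) - qseq (lam*Δ) k / qseq (lam*Δ) (k+1)
      = (-(lam*Δ))^(k+1) / (qseq (lam*Δ) (k+1) * qseq (lam*Δ) (k+2)) := by
    have e : qseq (lam*Δ) (k+1+1) = qseq (lam*Δ) (k+2) := rfl
    rw [e]
    field_simp
    linear_combination hdet
  rw [key, abs_div, abs_pow, abs_neg, abs_of_pos hc, abs_of_pos (by positivity)]

lemma diff_bounds (lam : ℝ) (Δ : ℕ) (hc : 0 < lam * Δ) (k : ℕ) :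
    ((lam*Δ) / ((1 + Real.sqrt (1 + 4*(lam*Δ)))/2)^2)^(k+1) / ((1 + Real.sqrt (1 + 4*(lam*Δ)))/2)
      ≤ |yseq lam Δ (k+2) - yseq lam Δ (k+1)| ∧
    |yseq lam Δ (k+2) - yseq lam Δ (k+1)|
      ≤ Real.sqrt (1 + 4*(lam*Δ))^2 *
        (((lam*Δ) / ((1 + Real.sqrt (1 + 4*(lam*Δ)))/2)^2)^(k+1) / ((1 + Real.sqrt (1 + 4*(lam*Δ)))/2)) := by
  set c := lam * (Δ:ℝ) with hcdef
  set s := Real.sqrt (1 + 4*c) with hsdef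
  set α := (1 + s)/2 with hαdef
  have hs := s_ge_one c hc.le
  have hα1 : 1 ≤ α := by rw [hαdef]; linarith
  have hα0 : 0 < α := by linarith
  have h1 := qseq_pos c hc (k+1)
  have h2 := qseq_pos c hc (k+2)
  have hu1 := qseq_le_alpha c hc (k+1)
  have hu2 := qseq_le_alpha c hc (k+2)
  have hl1 := alpha_le_qseq c hc (k+1)
  have hl2 := alpha_le_qseq c hc (k+2)
  rw [yseq_diff lam Δ hc k]
  have hrho : (c/α^2)^(k+1)/α = c^(k+1) / (α^(k+1) * α^(k+2)) := by
    rw [div_pow, div_div]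
    congr 1
    rw [← pow_mul]
    ring
  have hs0 : (0:ℝ) < s := by linarith
  constructor
  · rw [hrho]
    gcongr
  · rw [hrho]
    have hrw : s^2 * (c ^ (k + 1) / (α ^ (k + 1) * α ^ (k + 2)))
        = c ^ (k+1) / (α^(k+1)/s * (α^(k+2)/s)) := by
      field_simp
    rw [hrw]
    gcongr

/-- Packaged per-`Δ` geometric bounds on the consecutive differences. -/
lemma exists_bounds (lam : ℝ) (Δ : ℕ) (hc : 0 < lam * Δ) :
    ∃ ρ m M : ℝ, 0 < ρ ∧ ρ < 1 ∧ 0 < m ∧ 0 < M ∧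
      |betaMD lam Δ| / alphaMD lam Δ = ρ ∧
      ∀ h : ℕ, 2 ≤ h → m * ρ^h ≤ |yseq lam Δ h - yseq lam Δ (h-1)| ∧
        |yseq lam Δ h - yseq lam Δ (h-1)| ≤ M * ρ^h := by
  set c := lam * (Δ:ℝ) with hcdef
  set s := Real.sqrt (1 + 4*c) with hsdef
  set α := (1 + s)/2 with hαdef
  set ρ := c/α^2 with hρdef
  have hs1 : 1 ≤ s := s_ge_one c hc.le
  have hα0 : 0 < α := by rw [hαdef]; linarith
  have hsq : α^2 = α + c := by
    have := alpha_sq c hc.le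
    rw [← hsdef, ← hαdef] at this
    exact this
  have hρ0 : 0 < ρ := by rw [hρdef]; positivity
  have hρ1 : ρ < 1 := by
    rw [hρdef, div_lt_one (by positivity)]
    nlinarith
  have hρne : ρ ≠ 0 := ne_of_gt hρ0
  have hαne : α ≠ 0 := ne_of_gt hα0
  have hsne : s ≠ 0 := by positivity
  refine ⟨ρ, 1/(ρ*α), s^2/(ρ*α), hρ0, hρ1, by positivity, by positivity, ?_, ?_⟩
  · -- ratio identity
    have hss : s^2 = 1 + 4*c := by
      rw [hsdef]
      exact Real.sq_sqrt (by positivity)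
    have h4 : (1 : ℝ) + 4*lam*(Δ:ℝ) = 1 + 4*c := by rw [hcdef]; ring
    rw [betaMD, alphaMD, h4, ← hsdef]
    have habs : |(1 - s)/2| = (s-1)/2 := by
      rw [abs_of_nonpos (by linarith)]; ring
    rw [habs, hρdef, hαdef]
    rw [div_eq_div_iff (by linarith) (by positivity)]
    linear_combination ((s+1)/8) * hss
  · intro h hh
    obtain ⟨k, rfl⟩ : ∃ k, h = k + 2 := ⟨h - 2, by omega⟩
    have hb := diff_bounds lam Δ hc k
    rw [← hcdef, ← hsdef, ← hαdef, ← hρdef] at hb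
    have hd1 : (k + 2) - 1 = k + 1 := rfl
    rw [hd1]
    have hmeq : 1/(ρ*α) * ρ^(k+2) = ρ^(k+1)/α := by
      field_simp
      ring
    have hMeq : s^2/(ρ*α) * ρ^(k+2) = s^2 * (ρ^(k+1)/α) := by
      field_simp
      ring
    constructor
    · rw [hmeq]; exact hb.1
    · rw [hMeq]; exact hb.2

/-! ### The generic squeeze argument for `hlow` -/

lemma tendsto_aux (ρ C D : ℝ) (hρ : Real.log ρ < 0) :
    Tendsto (fun x : ℝ => ((-x - C)/Real.log ρ + D)/x) atTop (nhds (-1/Real.log ρ)) := by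
  have hne : Real.log ρ ≠ 0 := ne_of_lt hρ
  have h1 : Tendsto (fun x : ℝ => -1/Real.log ρ + (-C/Real.log ρ + D) * (1/x)) atTop
      (nhds (-1/Real.log ρ + (-C/Real.log ρ + D) * 0)) := by
    apply Tendsto.add tendsto_const_nhds
    apply Tendsto.const_mul
    exact tendsto_inv_atTop_zero.congr fun x => (one_div x).symm
  rw [mul_zero, add_zero] at h1
  apply h1.congr'
  filter_upwards [eventually_gt_atTop (0:ℝ)] with x hx
  have hxne : x ≠ 0 := ne_of_gt hx
  field_simp
  ring

lemma hlow_tendsto_of_bounds (lam : ℝ) (Δ : ℕ) (ρ m M : ℝ) (hρ0 : 0 < ρ) (hρ1 : ρ < 1)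
    (hm : 0 < m) (hM : 0 < M)
    (hbd : ∀ h : ℕ, 2 ≤ h → m * ρ^h ≤ |yseq lam Δ h - yseq lam Δ (h-1)| ∧
        |yseq lam Δ h - yseq lam Δ (h-1)| ≤ M * ρ^h) :
    (∀ ε : ℝ, 0 < ε → {h : ℕ | 2 ≤ h ∧ ε ≤ |yseq lam Δ h - yseq lam Δ (h-1)|}.Finite) ∧
    Filter.Tendsto (fun ε : ℝ => (hlow lam Δ ε : ℝ) / Real.log (1/ε))
      (nhdsWithin 0 (Set.Ioi 0)) (nhds (-1 / Real.log ρ)) := by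
  have hlogρ : Real.log ρ < 0 := Real.log_neg hρ0 hρ1
  have hlogρne : Real.log ρ ≠ 0 := ne_of_lt hlogρ
  have hfin : ∀ ε : ℝ, 0 < ε → {h : ℕ | 2 ≤ h ∧ ε ≤ |yseq lam Δ h - yseq lam Δ (h-1)|}.Finite := by
    intro ε hε
    have htend : Tendsto (fun n : ℕ => M * ρ^n) atTop (nhds 0) := by
      have := (tendsto_pow_atTop_nhds_zero_of_lt_one hρ0.le hρ1).const_mul M
      simpa using this
    obtain ⟨N, hN⟩ := Filter.eventually_atTop.mp (htend.eventually_lt_const hε)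
    apply Set.Finite.subset (Set.finite_Iio N)
    intro h hh
    simp only [Set.mem_setOf_eq] at hh
    by_contra hcon
    simp only [Set.mem_Iio, not_lt] at hcon
    have h1 := (hbd h hh.1).2
    have h2 := hN h hcon
    linarith [hh.2]
  refine ⟨hfin, ?_⟩
  have hL : Tendsto (fun ε : ℝ => Real.log (1/ε)) (nhdsWithin 0 (Set.Ioi 0)) atTop := by
    have h1 : Tendsto Real.log (nhdsWithin 0 (Set.Ioi 0)) atBot :=
      Real.tendsto_log_nhdsGT_zero
    have h2 : Tendsto (fun ε : ℝ => -Real.log ε) (nhdsWithin 0 (Set.Ioi 0)) atTop :=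
      tendsto_neg_atBot_atTop.comp h1
    apply h2.congr
    intro ε
    rw [one_div, Real.log_inv]
  have hg1 : Tendsto (fun ε : ℝ => ((-Real.log (1/ε) - Real.log m)/Real.log ρ + (-1))/Real.log (1/ε))
      (nhdsWithin 0 (Set.Ioi 0)) (nhds (-1/Real.log ρ)) :=
    (tendsto_aux ρ (Real.log m) (-1) hlogρ).comp hL
  have hg2 : Tendsto (fun ε : ℝ => ((-Real.log (1/ε) - Real.log M)/Real.log ρ + 0)/Real.log (1/ε))
      (nhdsWithin 0 (Set.Ioi 0)) (nhds (-1/Real.log ρ)) :=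
    (tendsto_aux ρ (Real.log M) 0 hlogρ).comp hL
  set ε₁ : ℝ := min (m * ρ^2) (1/2) with hε₁def
  have hε₁pos : 0 < ε₁ := by
    apply lt_min (by positivity) (by norm_num)
  apply tendsto_of_tendsto_of_tendsto_of_le_of_le' hg1 hg2
  · -- lower bound eventually
    filter_upwards [Ioo_mem_nhdsGT_of_mem (Set.mem_Ico.mpr ⟨le_refl (0:ℝ), hε₁pos⟩)] with ε hε
    obtain ⟨hε0, hεlt⟩ := hε
    have hεm : ε ≤ m * ρ^2 := le_of_lt (lt_of_lt_of_le hεlt (min_le_left _ _))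
    have hε1 : ε < 1 := by
      have := lt_of_lt_of_le hεlt (min_le_right _ _); linarith
    have hLpos : 0 < Real.log (1/ε) := Real.log_pos (by rw [lt_div_iff₀ hε0]; linarith)
    have hlogε : Real.log ε = -Real.log (1/ε) := by rw [one_div, Real.log_inv, neg_neg]
    set t : ℝ := (Real.log ε - Real.log m)/Real.log ρ with ht
    have ht2 : 2 ≤ t := by
      rw [ht, le_div_iff_of_neg hlogρ]
      have h1 : Real.log ε ≤ Real.log (m * ρ^2) := Real.log_le_log hε0 hεm
      rw [Real.log_mul (ne_of_gt hm) (by positivity), Real.log_pow] at h1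
      push_cast at h1
      linarith
    have ht0 : 0 ≤ t := by linarith
    set hstar : ℕ := ⌊t⌋₊ with hhstar
    have hstar2 : 2 ≤ hstar := Nat.le_floor (by exact_mod_cast ht2)
    have hstarle : (hstar : ℝ) ≤ t := Nat.floor_le ht0
    have hstargt : t - 1 < (hstar : ℝ) := by
      have := Nat.lt_floor_add_one t
      linarith
    have hεle : ε ≤ m * ρ^hstar := by
      have h1 : t * Real.log ρ ≤ (hstar : ℝ) * Real.log ρ :=
        mul_le_mul_of_nonpos_right hstarle hlogρ.le
      rw [ht, div_mul_cancel₀ _ hlogρne] at h1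
      have h2 : Real.log ε ≤ Real.log (m * ρ^hstar) := by
        rw [Real.log_mul (ne_of_gt hm) (by positivity), Real.log_pow]
        linarith
      exact (Real.log_le_log_iff hε0 (by positivity)).mp h2
    have hmem : hstar ∈ {h : ℕ | 2 ≤ h ∧ ε ≤ |yseq lam Δ h - yseq lam Δ (h-1)|} :=
      ⟨hstar2, le_trans hεle (hbd hstar hstar2).1⟩
    have hbdd : BddAbove {h : ℕ | 2 ≤ h ∧ ε ≤ |yseq lam Δ h - yseq lam Δ (h-1)|} :=
      (hfin ε hε0).bddAbove
    have hle : hstar ≤ hlow lam Δ ε := le_csSup hbdd hmem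
    have heq : ((-Real.log (1/ε) - Real.log m)/Real.log ρ + (-1)) = t - 1 := by
      rw [ht, hlogε]; ring
    rw [heq]
    have hcast : (hstar : ℝ) ≤ (hlow lam Δ ε : ℝ) := by exact_mod_cast hle
    have hfinal : t - 1 ≤ (hlow lam Δ ε : ℝ) := by linarith
    exact (div_le_div_iff_of_pos_right hLpos).mpr hfinal
  · -- upper bound eventually
    filter_upwards [Ioo_mem_nhdsGT_of_mem (Set.mem_Ico.mpr ⟨le_refl (0:ℝ), hε₁pos⟩)] with ε hε
    obtain ⟨hε0, hεlt⟩ := hε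
    have hεm : ε ≤ m * ρ^2 := le_of_lt (lt_of_lt_of_le hεlt (min_le_left _ _))
    have hε1 : ε < 1 := by
      have := lt_of_lt_of_le hεlt (min_le_right _ _); linarith
    have hLpos : 0 < Real.log (1/ε) := Real.log_pos (by rw [lt_div_iff₀ hε0]; linarith)
    have hlogε : Real.log ε = -Real.log (1/ε) := by rw [one_div, Real.log_inv, neg_neg]
    have hbdd : BddAbove {h : ℕ | 2 ≤ h ∧ ε ≤ |yseq lam Δ h - yseq lam Δ (h-1)|} :=
      (hfin ε hε0).bddAbove
    have hne : {h : ℕ | 2 ≤ h ∧ ε ≤ |yseq lam Δ h - yseq lam Δ (h-1)|}.Nonempty :=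
      ⟨2, ⟨le_rfl, le_trans hεm (hbd 2 le_rfl).1⟩⟩
    have hmem2 := Nat.sSup_mem hne hbdd
    set H : ℕ := hlow lam Δ ε with hHdef
    have hH2 : 2 ≤ H := hmem2.1
    have hHd : ε ≤ |yseq lam Δ H - yseq lam Δ (H-1)| := hmem2.2
    have hup : ε ≤ M * ρ^H := le_trans hHd (hbd H hH2).2
    have hlog : Real.log ε ≤ Real.log M + (H:ℝ) * Real.log ρ := by
      have h1 : Real.log ε ≤ Real.log (M * ρ^H) := Real.log_le_log hε0 hup
      rwa [Real.log_mul (ne_of_gt hM) (by positivity), Real.log_pow] at h1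
    have hHle : (H:ℝ) ≤ (Real.log ε - Real.log M)/Real.log ρ := by
      rw [le_div_iff_of_neg hlogρ]
      linarith
    have heq : ((-Real.log (1/ε) - Real.log M)/Real.log ρ + 0)
        = (Real.log ε - Real.log M)/Real.log ρ := by
      rw [hlogε]; ring
    rw [heq]
    exact (div_le_div_iff_of_pos_right hLpos).mpr hHle

/-! ### The `Δ → ∞` limit -/

lemma sqrt_tendsto_atTop : Tendsto Real.sqrt atTop atTop := by
  rw [tendsto_atTop_atTop]
  intro b
  refine ⟨(max b 0)^2, fun a ha => ?_⟩
  have h1 : Real.sqrt ((max b 0)^2) ≤ Real.sqrt a := Real.sqrt_le_sqrt ha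
  rw [Real.sqrt_sq (le_max_right b 0)] at h1
  exact le_trans (le_max_left b 0) h1

lemma part2 (lam : ℝ) (hlam : 0 < lam) :
    Tendsto (fun Δ : ℕ => (1 / Real.sqrt Δ) * (-1 / Real.log (|betaMD lam Δ| / alphaMD lam Δ)))
      atTop (nhds (Real.sqrt lam)) := by
  set s : ℝ → ℝ := fun x => Real.sqrt (1 + 4 * lam * x) with hs
  set w : ℝ → ℝ := fun x => 2 / (s x + 1) with hw
  have hsat : Tendsto s atTop atTop := by
    apply sqrt_tendsto_atTop.comp
    apply tendsto_atTop_add_const_left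
    exact (tendsto_const_mul_atTop_of_pos (by linarith)).mpr tendsto_id
  have hs_ge : ∀ x : ℝ, 1 ≤ x → 1 < s x := by
    intro x hx
    have h1 : (1:ℝ) < 1 + 4 * lam * x := by nlinarith
    have h2 := Real.sqrt_lt_sqrt (by norm_num : (0:ℝ) ≤ 1) h1
    simpa [hs] using h2
  have hs_nonneg : ∀ x : ℝ, 0 ≤ s x := fun x => Real.sqrt_nonneg _
  have hw0 : Tendsto w atTop (nhdsWithin 0 {t : ℝ | t ≠ 0}) := by
    rw [tendsto_nhdsWithin_iff]
    constructor
    · exact tendsto_const_nhds.div_atTop (tendsto_atTop_add_const_right _ _ hsat)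
    · filter_upwards with x
      have : 0 < s x + 1 := by have := hs_nonneg x; linarith
      simp only [hw, Set.mem_setOf_eq]
      positivity
  have hinner : Tendsto (fun t : ℝ => -t / Real.log (1 - t)) (nhdsWithin 0 {t : ℝ | t ≠ 0})
      (nhds 1) := by
    have hd : HasDerivAt (fun t : ℝ => Real.log (1 - t)) (-1) 0 := by
      have h1 : HasDerivAt (fun t : ℝ => 1 - t) (-1) 0 := by
        simpa using (hasDerivAt_id (0:ℝ)).const_sub 1
      have h2 := (Real.hasDerivAt_log (by norm_num : (1:ℝ) - 0 ≠ 0)).comp 0 h1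
      have h3 : ((1:ℝ) - 0)⁻¹ * -1 = -1 := by norm_num
      rw [h3] at h2
      exact h2
    have hslope := hasDerivAt_iff_tendsto_slope.mp hd
    have hslope' : Tendsto (fun t : ℝ => Real.log (1 - t) / t) (nhdsWithin 0 {t : ℝ | t ≠ 0})
        (nhds (-1)) := by
      apply hslope.congr
      intro t
      simp [slope_fun_def, div_eq_inv_mul]
    have hinv := hslope'.inv₀ (by norm_num : (-1:ℝ) ≠ 0)
    have hme : ((-1:ℝ))⁻¹ = -1 := by norm_num
    rw [hme] at hinv
    have h3 : Tendsto (fun t : ℝ => t / Real.log (1 - t)) (nhdsWithin 0 {t : ℝ | t ≠ 0})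
        (nhds (-1)) := by
      have e : ∀ t : ℝ, (Real.log (1 - t) / t)⁻¹ = t / Real.log (1 - t) := fun t => by
        rw [inv_div]
      simpa [e] using hinv
    have h4 := h3.neg
    simp only [neg_neg] at h4
    apply h4.congr
    intro t
    rw [neg_div]
  have hA : Tendsto (fun x : ℝ => -(w x) / Real.log (1 - w x)) atTop (nhds 1) :=
    hinner.comp hw0
  have hB : Tendsto (fun x : ℝ => (s x + 1) / (2 * Real.sqrt x)) atTop (nhds (Real.sqrt lam)) := by
    have h1 : Tendsto (fun x : ℝ => Real.sqrt (1/x + 4*lam) / 2 + 1 / (2 * Real.sqrt x)) atTop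
        (nhds (Real.sqrt (4*lam) / 2 + 0)) := by
      apply Tendsto.add
      · apply Tendsto.div_const
        apply (Real.continuous_sqrt.tendsto _).comp
        have h0 : Tendsto (fun x : ℝ => 1/x + 4*lam) atTop (nhds (0 + 4*lam)) := by
          apply Tendsto.add_const
          exact tendsto_inv_atTop_zero.congr fun x => (one_div x).symm
        simpa using h0
      · apply tendsto_const_nhds.div_atTop
        exact Tendsto.const_mul_atTop two_pos sqrt_tendsto_atTop
    have hval : Real.sqrt (4*lam) / 2 + 0 = Real.sqrt lam := by
      rw [show (4:ℝ)*lam = 2^2 * lam by ring, Real.sqrt_mul (by positivity) lam,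
        Real.sqrt_sq (by norm_num : (0:ℝ) ≤ 2)]
      ring
    rw [hval] at h1
    apply h1.congr'
    filter_upwards [eventually_ge_atTop (1:ℝ)] with x hx
    have hx0 : (0:ℝ) < x := by linarith
    have hsx : Real.sqrt x > 0 := Real.sqrt_pos.mpr hx0
    have key : Real.sqrt (1/x + 4*lam) = s x / Real.sqrt x := by
      rw [show 1/x + 4*lam = (1 + 4*lam*x)/x by field_simp, Real.sqrt_div' _ hx0.le]
    rw [key, hs]
    field_simp
  have hF : Tendsto (fun x : ℝ =>
      (1 / Real.sqrt x) * (-1 / Real.log ((s x - 1)/(s x + 1)))) atTop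
      (nhds (Real.sqrt lam)) := by
    have hmul := hA.mul hB
    rw [one_mul] at hmul
    apply hmul.congr'
    filter_upwards [eventually_ge_atTop (1:ℝ)] with x hx
    have hs1 := hs_ge x hx
    have hsx : Real.sqrt x > 0 := Real.sqrt_pos.mpr (by linarith)
    have hsp : 0 < s x + 1 := by linarith
    have hwx : w x = 2 / (s x + 1) := rfl
    have h1w : 1 - w x = (s x - 1)/(s x + 1) := by
      rw [hwx]; field_simp; ring
    have hw01 : 0 < w x := by rw [hwx]; positivity
    have hw11 : w x < 1 := by
      rw [hwx, div_lt_one hsp]; linarith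
    have hlogneg : Real.log (1 - w x) < 0 :=
      Real.log_neg (by linarith) (by linarith)
    rw [← h1w]
    set v := Real.log (1 - w x) with hv
    have hvne : v ≠ 0 := ne_of_lt hlogneg
    have hws : w x * (s x + 1) = 2 := by rw [hwx]; field_simp
    calc -w x / v * ((s x + 1)/(2*Real.sqrt x))
        = (w x * (s x + 1)) * (-1/(v * (2*Real.sqrt x))) := by ring
      _ = 2 * (-1/(v*(2*Real.sqrt x))) := by rw [hws]
      _ = 1/Real.sqrt x * (-1/v) := by
          field_simp
  have hcomp := hF.comp tendsto_natCast_atTop_atTop (α := ℕ)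
  apply hcomp.congr'
  filter_upwards [eventually_ge_atTop (1:ℕ)] with Δ hΔ
  have hΔ1 : (1:ℝ) ≤ (Δ:ℝ) := by exact_mod_cast hΔ
  have hs1 : 1 < s Δ := hs_ge _ hΔ1
  have habs : |betaMD lam Δ| = (s Δ - 1)/2 := by
    rw [betaMD, abs_of_nonpos (by simp only [hs] at hs1 ⊢; linarith)]
    simp only [hs]; ring
  have hratio : |betaMD lam Δ| / alphaMD lam Δ = (s Δ - 1)/(s Δ + 1) := by
    rw [habs, alphaMD]
    rw [show (1 + Real.sqrt (1 + 4 * lam * (Δ:ℝ))) = s Δ + 1 by simp only [hs]; ring]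
    rw [div_div_div_comm]
    norm_num
  simp only [Function.comp_apply, hratio]

theorem stmt14 (lam : ℝ) (hlam : 0 < lam) :
    (∀ Δ : ℕ, 1 ≤ Δ →
      (∃ ε₀ : ℝ, 0 < ε₀ ∧ ∀ ε : ℝ, 0 < ε → ε < ε₀ →
        {h : ℕ | 2 ≤ h ∧ ε ≤ |yseq lam Δ h - yseq lam Δ (h - 1)|}.Finite) ∧
      Filter.Tendsto (fun ε : ℝ => (hlow lam Δ ε : ℝ) / Real.log (1 / ε))
        (nhdsWithin 0 (Set.Ioi 0))
        (nhds (-1 / Real.log (|betaMD lam Δ| / alphaMD lam Δ)))) ∧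
    Filter.Tendsto
      (fun Δ : ℕ => (1 / Real.sqrt Δ) * (-1 / Real.log (|betaMD lam Δ| / alphaMD lam Δ)))
      Filter.atTop (nhds (Real.sqrt lam)) := by
  constructor
  · intro Δ hΔ
    have hΔ0 : (0:ℝ) < (Δ:ℝ) := by
      have : (1:ℝ) ≤ (Δ:ℝ) := by exact_mod_cast hΔ
      linarith
    have hc : 0 < lam * (Δ:ℝ) := mul_pos hlam hΔ0
    obtain ⟨ρ, m, M, hρ0, hρ1, hm, hM, hratio, hbd⟩ := exists_bounds lam Δ hc
    have main := hlow_tendsto_of_bounds lam Δ ρ m M hρ0 hρ1 hm hM hbd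
    refine ⟨⟨1, one_pos, fun ε hε _ => main.1 ε hε⟩, ?_⟩
    rw [hratio]
    exact main.2
  · exact part2 lam hlam
end
end
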